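/- Let κ be an uncountable regular cardinal and let ι be an injection from κ into the binary sequences of length < κ. Suppose H ⊆ κ has cardinality κ, the map ι is <_lex-monotone on H (i.e., either ι(α) <_lex ι(β) for all α < β in H, or ι(β) <_lex ι(α) for all α < β in H), and for every ordinal γ < κ there exists a binary sequence t of length γ such that the set {α ∈ H : t ⊆ ι(α)} has cardinality κ. Then there exists x : κ → 2 such that the set {γ < κ : there is β < κ with x↾γ ⊆ ι(β)} is unbounded in κ. -/

import Mathlib

/-- A binary sequence, coded as a pair consisting of its length and its values
(values at or beyond the length are irrelevant junk, normalized to `0` by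
`IsBSeq`). -/
abbrev BSeq : Type _ := Ordinal × (Ordinal → Fin 2)

/-- The length of a binary sequence. -/
def bLen (t : BSeq) : Ordinal := t.1

/-- The values of a binary sequence. -/
def bVal (t : BSeq) : Ordinal → Fin 2 := t.2

/-- A pair codes a genuine binary sequence: all values at or beyond the length
are `0`. -/
def IsBSeq (t : BSeq) : Prop := ∀ β, bLen t ≤ β → bVal t β = 0

/-- `BExt t u` means `t ⊆ u`: the binary sequence `u` extends `t`. -/
def BExt (t u : BSeq) : Prop := bLen t ≤ bLen u ∧ ∀ β < bLen t, bVal u β = bVal t β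

/-- `BExtFun t x` means `t ⊆ x`: the total function `x` extends the binary
sequence `t`. -/
def BExtFun (t : BSeq) (x : Ordinal → Fin 2) : Prop := ∀ β < bLen t, x β = bVal t β

/-- `x↾γ`: the restriction of `x : κ → 2` to `γ`, as a binary sequence of
length `γ`. -/
noncomputable def bRestrict (x : Ordinal → Fin 2) (γ : Ordinal) : BSeq :=
  (γ, fun β => if β < γ then x β else 0)

/-- The lexicographic ordering on binary sequences. -/
def BLex (s t : BSeq) : Prop :=
  (BExt s t ∧ s ≠ t) ∨
    ∃ γ, γ < bLen s ∧ γ < bLen t ∧ (∀ β < γ, bVal s β = bVal t β) ∧ bVal s γ < bVal t γ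

universe u

lemma blex_not (s u : BSeq) (β : Ordinal) (hβs : β < bLen s) (hβu : β < bLen u)
    (hagree : ∀ δ < β, bVal s δ = bVal u δ) (hlt : bVal s β < bVal u β) : ¬ BLex u s := by
  rintro (⟨⟨hle, hv⟩, _⟩ | ⟨δ, hδu, hδs, hag, hvlt⟩)
  · exact absurd (hv β hβu) (ne_of_lt hlt)
  · rcases lt_trichotomy δ β with h | h | h
    · exact absurd ((hagree δ h).symm) (ne_of_lt hvlt)
    · subst h; exact absurd hvlt (not_lt.2 hlt.le)
    · exact absurd (hag β h) (ne_of_gt hlt)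

lemma card_bound (κ : Cardinal.{u}) (A : Set Ordinal.{u}) (b : Ordinal.{u}) (hb : b < κ.ord)
    (hA : A ⊆ Set.Iio b) (hcard : Cardinal.mk ↥A = Cardinal.lift.{u + 1} κ) : False := by
  have h1 : Cardinal.mk ↥A ≤ Cardinal.mk ↥(Set.Iio b) := Cardinal.mk_le_mk_of_subset hA
  rw [hcard, Ordinal.mk_Iio_ordinal, Cardinal.lift_le] at h1
  exact absurd ((Cardinal.lt_ord.1 hb)) (not_lt.2 h1)


/-- Let `κ` be an uncountable regular cardinal and `ι` an
injection from `κ` into the binary sequences of length `< κ`.  Suppose `H ⊆ κ`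
has cardinality `κ`, `ι` is `<_lex`-monotone on `H`, and for every `γ < κ`
there is a binary sequence `t` of length `γ` such that
`{α ∈ H : t ⊆ ι(α)}` has cardinality `κ`.  Then there is `x : κ → 2` such that
`{γ < κ : ∃ β < κ, x↾γ ⊆ ι(β)}` is unbounded in `κ`. -/
theorem stmt4 (κ : Cardinal.{u}) (hreg : κ.IsRegular) (hunc : Cardinal.aleph0 < κ)
    (ι : Ordinal → BSeq)
    (hιval : ∀ α < κ.ord, IsBSeq (ι α) ∧ bLen (ι α) < κ.ord)
    (hιinj : Set.InjOn ι (Set.Iio κ.ord))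
    (H : Set Ordinal) (hH : H ⊆ Set.Iio κ.ord)
    (hHcard : Cardinal.mk ↥H = Cardinal.lift.{u + 1} κ)
    (hmono : (∀ α ∈ H, ∀ β ∈ H, α < β → BLex (ι α) (ι β)) ∨
             (∀ α ∈ H, ∀ β ∈ H, α < β → BLex (ι β) (ι α)))
    (hbig : ∀ γ < κ.ord, ∃ t : BSeq, IsBSeq t ∧ bLen t = γ ∧
      Cardinal.mk ↥{α : Ordinal | α ∈ H ∧ BExt t (ι α)} = Cardinal.lift.{u + 1} κ) :
    ∃ x : Ordinal → Fin 2, ∀ γ < κ.ord, ∃ γ', γ ≤ γ' ∧ γ' < κ.ord ∧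
      ∃ β < κ.ord, BExt (bRestrict x γ') (ι β) := by
  classical
  have hκ0 : Cardinal.lift.{u+1} κ ≠ 0 := by
    rw [Ne, Cardinal.lift_eq_zero]
    exact (Cardinal.aleph0_pos.trans hunc).ne'
  have hlim : Order.IsSuccLimit κ.ord := Cardinal.isSuccLimit_ord hunc.le
  -- uniqueness of big sequences of a given length
  have huniq : ∀ t t' : BSeq, IsBSeq t → IsBSeq t' → bLen t = bLen t' →
      Cardinal.mk ↥{α : Ordinal | α ∈ H ∧ BExt t (ι α)} = Cardinal.lift.{u + 1} κ →
      Cardinal.mk ↥{α : Ordinal | α ∈ H ∧ BExt t' (ι α)} = Cardinal.lift.{u + 1} κ →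
      t = t' := by
    intro t t' hbs hbs' hlen hc hc'
    by_contra hne
    have hSne : {β : Ordinal | bVal t β ≠ bVal t' β}.Nonempty := by
      by_contra h
      refine hne (Prod.ext hlen (funext fun β => ?_))
      by_contra hβ
      exact h ⟨β, hβ⟩
    set β₀ := sInf {β : Ordinal | bVal t β ≠ bVal t' β} with hβ₀def
    have hβ₀mem : bVal t β₀ ≠ bVal t' β₀ := csInf_mem hSne
    have hβ₀min : ∀ δ < β₀, bVal t δ = bVal t' δ := by
      intro δ hδ
      by_contra h
      exact absurd (csInf_le' (s := {β : Ordinal | bVal t β ≠ bVal t' β}) h) (not_le.2 hδ)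
    have hβ₀lt : β₀ < bLen t := by
      by_contra h
      push_neg at h
      exact hβ₀mem ((hbs β₀ h).trans (hbs' β₀ (hlen ▸ h)).symm)
    have hβ₀lt' : β₀ < bLen t' := hlen ▸ hβ₀lt
    -- key claim: two big sequences differing first at β₀ give a contradiction
    have key : ∀ s s' : BSeq, β₀ < bLen s → β₀ < bLen s' →
        (∀ δ < β₀, bVal s δ = bVal s' δ) → bVal s β₀ < bVal s' β₀ →
        Cardinal.mk ↥{α : Ordinal | α ∈ H ∧ BExt s (ι α)} = Cardinal.lift.{u + 1} κ →
        Cardinal.mk ↥{α : Ordinal | α ∈ H ∧ BExt s' (ι α)} = Cardinal.lift.{u + 1} κ →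
        False := by
      intro s s' hls hls' hag hvlt hcs hcs'
      have hAne : {α : Ordinal | α ∈ H ∧ BExt s (ι α)}.Nonempty := by
        rw [← Set.nonempty_coe_sort, ← Cardinal.mk_ne_zero_iff, hcs]; exact hκ0
      have hA'ne : {α : Ordinal | α ∈ H ∧ BExt s' (ι α)}.Nonempty := by
        rw [← Set.nonempty_coe_sort, ← Cardinal.mk_ne_zero_iff, hcs']; exact hκ0
      -- for α extending s and α' extending s', the lex relation is fixed
      have horder : ∀ α ∈ H, ∀ α' ∈ H, BExt s (ι α) → BExt s' (ι α') →
          ¬ BLex (ι α') (ι α) := by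
        intro α hα α' hα' he he' hlex
        refine blex_not (ι α) (ι α') β₀ (lt_of_lt_of_le hls he.1)
          (lt_of_lt_of_le hls' he'.1) ?_ ?_ hlex
        · intro δ hδ
          rw [he.2 δ (hδ.trans hls), he'.2 δ (hδ.trans hls'), hag δ hδ]
        · rw [he.2 β₀ hls, he'.2 β₀ hls']; exact hvlt
      have hne' : ∀ α ∈ H, ∀ α' ∈ H, BExt s (ι α) → BExt s' (ι α') → α ≠ α' := by
        intro α hα α' hα' he he' heq
        subst heq
        have h1 : bVal (ι α) β₀ = bVal s β₀ := he.2 β₀ hls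
        have h2 : bVal (ι α) β₀ = bVal s' β₀ := he'.2 β₀ hls'
        exact absurd (h1 ▸ h2 ▸ hvlt) (lt_irrefl _)
      rcases hmono with hmono | hmono
      · -- increasing: every extender of s is below every extender of s'
        obtain ⟨α'₀, hα'₀H, hα'₀e⟩ := hA'ne
        refine card_bound κ _ α'₀ (hH hα'₀H) ?_ hcs
        rintro α ⟨hαH, hαe⟩
        rcases lt_trichotomy α α'₀ with h | h | h
        · exact h
        · exact absurd h (hne' α hαH α'₀ hα'₀H hαe hα'₀e)
        · exact absurd (hmono α'₀ hα'₀H α hαH h) (horder α hαH α'₀ hα'₀H hαe hα'₀e)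
      · -- decreasing: every extender of s' is below every extender of s
        obtain ⟨α₀, hα₀H, hα₀e⟩ := hAne
        refine card_bound κ _ α₀ (hH hα₀H) ?_ hcs'
        rintro α' ⟨hα'H, hα'e⟩
        rcases lt_trichotomy α' α₀ with h | h | h
        · exact h
        · exact absurd h.symm (hne' α₀ hα₀H α' hα'H hα₀e hα'e)
        · exact absurd (hmono α₀ hα₀H α' hα'H h) (horder α₀ hα₀H α' hα'H hα₀e hα'e)
    rcases Ne.lt_or_gt hβ₀mem with h | h
    · exact key t t' hβ₀lt hβ₀lt' hβ₀min h hc hc'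
    · exact key t' t hβ₀lt' hβ₀lt (fun δ hδ => (hβ₀min δ hδ).symm) h hc' hc
  -- choose the big sequences
  choose t ht1 ht2 ht3 using hbig
  -- coherence
  have hcoh : ∀ γ (hγ : γ < κ.ord), ∀ γ' (hγ' : γ' < κ.ord), γ ≤ γ' →
      ∀ β < γ, bVal (t γ' hγ') β = bVal (t γ hγ) β := by
    intro γ hγ γ' hγ' hle β hβ
    set r : BSeq := (γ, fun β => if β < γ then bVal (t γ' hγ') β else 0) with hrdef
    have hrbs : IsBSeq r := by
      intro δ hδ
      simp only [IsBSeq, bVal, bLen, hrdef] at *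
      rw [if_neg (not_lt.2 hδ)]
    have hrlen : bLen r = γ := rfl
    have hsub : {α : Ordinal | α ∈ H ∧ BExt (t γ' hγ') (ι α)} ⊆
        {α : Ordinal | α ∈ H ∧ BExt r (ι α)} := by
      rintro α ⟨hαH, he⟩
      refine ⟨hαH, ?_, ?_⟩
      · calc bLen r = γ := hrlen
          _ ≤ γ' := hle
          _ = bLen (t γ' hγ') := (ht2 γ' hγ').symm
          _ ≤ bLen (ι α) := he.1
      · intro δ hδ
        rw [hrlen] at hδ
        have : δ < bLen (t γ' hγ') := by rw [ht2 γ' hγ']; exact lt_of_lt_of_le hδ hle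
        simp only [bVal, hrdef, if_pos hδ]
        exact he.2 δ this
    have hrcard : Cardinal.mk ↥{α : Ordinal | α ∈ H ∧ BExt r (ι α)} =
        Cardinal.lift.{u + 1} κ := by
      refine le_antisymm ?_ ?_
      · rw [← hHcard]
        exact Cardinal.mk_le_mk_of_subset (fun α hα => hα.1)
      · rw [← ht3 γ' hγ']
        exact Cardinal.mk_le_mk_of_subset hsub
    have := huniq r (t γ hγ) hrbs (ht1 γ hγ) (by rw [hrlen, ht2 γ hγ]) hrcard (ht3 γ hγ)
    rw [← this]
    simp only [bVal, hrdef, if_pos hβ]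
  -- define x
  set x : Ordinal → Fin 2 := fun β =>
    if h : β + 1 < κ.ord then bVal (t (β + 1) h) β else 0 with hxdef
  refine ⟨x, fun γ hγ => ⟨γ, le_refl γ, hγ, ?_⟩⟩
  have hAne : {α : Ordinal | α ∈ H ∧ BExt (t γ hγ) (ι α)}.Nonempty := by
    rw [← Set.nonempty_coe_sort, ← Cardinal.mk_ne_zero_iff, ht3 γ hγ]; exact hκ0
  obtain ⟨α, hαH, hαe⟩ := hAne
  refine ⟨α, hH hαH, ?_, ?_⟩
  · show bLen (bRestrict x γ) ≤ bLen (ι α)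
    have : bLen (bRestrict x γ) = γ := rfl
    rw [this, ← ht2 γ hγ]
    exact hαe.1
  · intro β hβ
    have hβγ : β < γ := hβ
    have hβ1 : β + 1 < κ.ord := hlim.succ_lt (hβγ.trans hγ)
    have hβ1γ : β + 1 ≤ γ := Order.add_one_le_of_lt hβγ
    have hxval : bVal (bRestrict x γ) β = x β := by
      simp only [bRestrict, bVal, if_pos hβγ]
    rw [hxval]
    have : x β = bVal (t (β + 1) hβ1) β := by rw [hxdef]; simp only [dif_pos hβ1]
    rw [this, ← hcoh (β + 1) hβ1 γ hγ hβ1γ β (Order.lt_add_one_iff.2 le_rfl)]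
    have : bVal (ι α) β = bVal (t γ hγ) β := hαe.2 β (by rw [ht2 γ hγ]; exact hβγ)
    rw [this, hcoh (β + 1) hβ1 γ hγ hβ1γ β (Order.lt_add_one_iff.2 le_rfl)]
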